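/- arXiv:2407.04045 — 4 statements merged into one kernel-verified Lean document; each statement's English description precedes it below -/
import Mathlib

section
/- Let V ∈ C²(ℝ,ℝ) with bounded second derivative, let P, Q be momentum and position on L²(ℝ), and N = P² + Q². Then the commutator satisfies -i[V(Q),P²] = 2V'(Q)P - iV''(Q) on the Schwartz space, and ‖[V(Q),P²]ψ‖ ≤ ν‖Nψ‖ for all Schwartz ψ, where ν = 5‖V''‖_∞ + 4|V'(0)|. -/
open MeasureTheory Filter SchwartzMap Topology ComplexConjugate ENNReal

noncomputable section
namespace Stmt8

lemma bdd (φ : 𝓢(ℝ, ℂ)) : ∃ C : ℝ, 0 ≤ C ∧ ∀ x, ‖φ x‖ ≤ C :=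
  ⟨SchwartzMap.seminorm ℝ 0 0 φ, apply_nonneg _ _, fun x => norm_le_seminorm ℝ φ x⟩

lemma int1 (k : ℕ) (φ γ : 𝓢(ℝ, ℂ)) :
    Integrable (fun x : ℝ => |x| ^ k * (‖φ x‖ * ‖γ x‖)) := by
  obtain ⟨C, hC0, hC⟩ := bdd γ
  have h := (φ.integrable_pow_mul volume k).const_mul C
  refine h.mono' ?_ ?_
  · have : Continuous (fun x : ℝ => |x| ^ k * (‖φ x‖ * ‖γ x‖)) := by
      fun_prop
    exact this.aestronglyMeasurable
  · filter_upwards with x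
    have h1 : |x| ^ k * (‖φ x‖ * ‖γ x‖) ≤ C * (‖x‖ ^ k * ‖φ x‖) := by
      rw [Real.norm_eq_abs]
      calc |x| ^ k * (‖φ x‖ * ‖γ x‖) ≤ |x| ^ k * (‖φ x‖ * C) := by
            gcongr; exact hC x
        _ = C * (|x| ^ k * ‖φ x‖) := by ring
    rw [Real.norm_eq_abs, abs_of_nonneg (by positivity)]
    exact h1

lemma norm_aux (k : ℕ) (φ γ : 𝓢(ℝ, ℂ)) (x : ℝ) :
    ‖(x : ℂ) ^ k * (φ x * (starRingEnd ℂ) (γ x))‖ = |x| ^ k * (‖φ x‖ * ‖γ x‖) := by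
  simp [norm_mul, norm_pow, Complex.norm_real, Real.norm_eq_abs]

lemma tendsto_aux (k : ℕ) (φ γ : 𝓢(ℝ, ℂ)) (l : Filter ℝ)
    (hl : Tendsto (fun x : ℝ => |x|) l atTop) :
    Tendsto (fun x : ℝ => (x : ℂ) ^ k * (φ x * (starRingEnd ℂ) (γ x))) l (𝓝 0) := by
  obtain ⟨C, hC0, hC⟩ := bdd γ
  obtain ⟨D, hD0, hD⟩ := φ.decay (k + 1) 0
  rw [tendsto_zero_iff_norm_tendsto_zero]
  have hDb : ∀ x : ℝ, |x| ^ (k + 1) * ‖φ x‖ ≤ D := by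
    intro x
    simpa [Real.norm_eq_abs] using hD x
  apply squeeze_zero' (g := fun x : ℝ => C * D / |x|)
  · filter_upwards with x; positivity
  · filter_upwards [hl.eventually_ge_atTop 1] with x hx
    have hxpos : (0 : ℝ) < |x| := lt_of_lt_of_le one_pos hx
    rw [norm_aux]
    have key : |x| ^ k * ‖φ x‖ ≤ D / |x| := by
      rw [le_div_iff₀ hxpos]
      calc |x| ^ k * ‖φ x‖ * |x| = |x| ^ (k + 1) * ‖φ x‖ := by ring
        _ ≤ D := hDb x
    have step : (|x| ^ k * ‖φ x‖) * ‖γ x‖ ≤ (D / |x|) * C := by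
      apply mul_le_mul key (hC x) (norm_nonneg _)
      positivity
    calc |x| ^ k * (‖φ x‖ * ‖γ x‖) = (|x| ^ k * ‖φ x‖) * ‖γ x‖ := by ring
      _ ≤ (D / |x|) * C := step
      _ = C * D / |x| := by field_simp
  · have : Tendsto (fun x : ℝ => |x|⁻¹) l (𝓝 0) :=
      (tendsto_inv_atTop_zero).comp hl
    have := this.const_mul (C * D)
    simpa [div_eq_mul_inv, mul_comm] using this



lemma int2 (k : ℕ) (φ γ : 𝓢(ℝ, ℂ)) :
    Integrable (fun x : ℝ => (x : ℂ) ^ k * (φ x * (starRingEnd ℂ) (γ x))) := by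
  refine (int1 k φ γ).mono' ?_ ?_
  · have : Continuous (fun x : ℝ => (x : ℂ) ^ k * (φ x * (starRingEnd ℂ) (γ x))) :=
      (Complex.continuous_ofReal.pow k).mul
        (φ.continuous.mul (Complex.continuous_conj.comp γ.continuous))
    exact this.aestronglyMeasurable
  · filter_upwards with x
    rw [norm_aux]

lemma hd_prod (φ γ : 𝓢(ℝ, ℂ)) (x : ℝ) :
    HasDerivAt (fun y : ℝ => φ y * (starRingEnd ℂ) (γ y))
      (deriv φ x * (starRingEnd ℂ) (γ x) + φ x * (starRingEnd ℂ) (deriv γ x)) x := by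
  have h1 : HasDerivAt (⇑φ) (deriv φ x) x := (φ.differentiableAt).hasDerivAt
  have h2 : HasDerivAt (⇑γ) (deriv γ x) x := (γ.differentiableAt).hasDerivAt
  exact h1.mul h2.star

lemma hd_pow (k : ℕ) (x : ℝ) :
    HasDerivAt (fun y : ℝ => (y : ℂ) ^ k) ((k : ℂ) * (x : ℂ) ^ (k - 1)) x := by
  have := (hasDerivAt_pow k (x : ℂ)).comp_ofReal
  exact this

lemma ibp0 (φ γ : 𝓢(ℝ, ℂ)) :
    (Integrable (fun x : ℝ => deriv φ x * (starRingEnd ℂ) (γ x) + φ x * (starRingEnd ℂ) (deriv γ x))) ∧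
    ∫ x : ℝ, (deriv φ x * (starRingEnd ℂ) (γ x) + φ x * (starRingEnd ℂ) (deriv γ x)) = 0 := by
  have hbot : Tendsto (fun y : ℝ => φ y * (starRingEnd ℂ) (γ y)) atBot (𝓝 0) := by
    simpa using tendsto_aux 0 φ γ atBot tendsto_abs_atBot_atTop
  have htop : Tendsto (fun y : ℝ => φ y * (starRingEnd ℂ) (γ y)) atTop (𝓝 0) := by
    simpa using tendsto_aux 0 φ γ atTop tendsto_abs_atTop_atTop
  have hint : Integrable (fun x : ℝ =>
      deriv φ x * (starRingEnd ℂ) (γ x) + φ x * (starRingEnd ℂ) (deriv γ x)) := by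
    have := (int2 0 (derivCLM ℝ ℂ φ) γ).add (int2 0 φ (derivCLM ℝ ℂ γ))
    refine this.congr ?_
    filter_upwards with x
    simp [derivCLM_apply]
  have key := integral_of_hasDerivAt_of_tendsto (hd_prod φ γ) hint hbot htop
  exact ⟨hint, by simpa using key⟩

lemma ibp (k : ℕ) (φ γ : 𝓢(ℝ, ℂ)) :
    (Integrable (fun x : ℝ => (k + 1 : ℂ) * (x : ℂ) ^ k * (φ x * (starRingEnd ℂ) (γ x))
      + (x : ℂ) ^ (k + 1) * (deriv φ x * (starRingEnd ℂ) (γ x)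
        + φ x * (starRingEnd ℂ) (deriv γ x)))) ∧
    ∫ x : ℝ, ((k + 1 : ℂ) * (x : ℂ) ^ k * (φ x * (starRingEnd ℂ) (γ x))
      + (x : ℂ) ^ (k + 1) * (deriv φ x * (starRingEnd ℂ) (γ x)
        + φ x * (starRingEnd ℂ) (deriv γ x))) = 0 := by
  have hbot := tendsto_aux (k + 1) φ γ atBot tendsto_abs_atBot_atTop
  have htop := tendsto_aux (k + 1) φ γ atTop tendsto_abs_atTop_atTop
  have hderiv : ∀ x : ℝ, HasDerivAt
      (fun y : ℝ => (y : ℂ) ^ (k + 1) * (φ y * (starRingEnd ℂ) (γ y)))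
      ((k + 1 : ℂ) * (x : ℂ) ^ k * (φ x * (starRingEnd ℂ) (γ x))
        + (x : ℂ) ^ (k + 1) * (deriv φ x * (starRingEnd ℂ) (γ x)
          + φ x * (starRingEnd ℂ) (deriv γ x))) x := by
    intro x
    have := (hd_pow (k + 1) x).mul (hd_prod φ γ x)
    have e : ((k + 1 : ℕ) : ℂ) = (k : ℂ) + 1 := by push_cast; ring
    simpa [Nat.add_sub_cancel, e, Pi.mul_def] using this
  have hint : Integrable (fun x : ℝ =>
      (k + 1 : ℂ) * (x : ℂ) ^ k * (φ x * (starRingEnd ℂ) (γ x))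
      + (x : ℂ) ^ (k + 1) * (deriv φ x * (starRingEnd ℂ) (γ x)
        + φ x * (starRingEnd ℂ) (deriv γ x))) := by
    have h1 := (int2 k φ γ).const_mul ((k : ℂ) + 1)
    have h2' : Integrable (fun x : ℝ => (x : ℂ) ^ (k + 1)
        * (deriv φ x * (starRingEnd ℂ) (γ x) + φ x * (starRingEnd ℂ) (deriv γ x))) := by
      have h2 := (int2 (k + 1) (derivCLM ℝ ℂ φ) γ).add (int2 (k + 1) φ (derivCLM ℝ ℂ γ))
      refine h2.congr ?_
      filter_upwards with x
      simp [derivCLM_apply]; ring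
    refine (h1.add h2').congr ?_
    filter_upwards with x
    simp only [Pi.add_apply]; ring
  have key := integral_of_hasDerivAt_of_tendsto hderiv hint hbot htop
  exact ⟨hint, by simpa using key⟩

lemma intRe (k : ℕ) (φ γ : 𝓢(ℝ, ℂ)) :
    Integrable (fun x : ℝ => x ^ k * (φ x * (starRingEnd ℂ) (γ x)).re) := by
  refine (int1 k φ γ).mono' ?_ ?_
  · have : Continuous (fun x : ℝ => x ^ k * (φ x * (starRingEnd ℂ) (γ x)).re) :=
      (continuous_pow k).mul ((Complex.continuous_re).comp
        (φ.continuous.mul (Complex.continuous_conj.comp γ.continuous)))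
    exact this.aestronglyMeasurable
  · filter_upwards with x
    rw [Real.norm_eq_abs, abs_mul, abs_pow]
    gcongr
    calc |(φ x * (starRingEnd ℂ) (γ x)).re| ≤ ‖φ x * (starRingEnd ℂ) (γ x)‖ :=
          Complex.abs_re_le_norm _
      _ = ‖φ x‖ * ‖γ x‖ := by simp [norm_mul]

lemma intSq (k : ℕ) (φ : 𝓢(ℝ, ℂ)) :
    Integrable (fun x : ℝ => x ^ (2 * k) * ‖φ x‖ ^ 2) := by
  refine (int1 (2 * k) φ φ).congr ?_
  filter_upwards with x
  rw [pow_mul, ← abs_pow, abs_sq, ← pow_mul, sq]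




lemma L1 (z : ℂ) : (z * conj z).re = ‖z‖ ^ 2 := by
  rw [Complex.mul_conj, Complex.ofReal_re, Complex.normSq_eq_norm_sq]

lemma L2 (z w : ℂ) : (w * conj z + z * conj w).re = 2 * (w * conj z).re := by
  have : z * conj w = conj (w * conj z) := by
    rw [map_mul, Complex.conj_conj]; ring
  rw [this, Complex.add_re, Complex.conj_re]; ring

lemma L3 (x : ℝ) (k : ℕ) (z : ℂ) : ((x : ℂ) ^ k * z).re = x ^ k * z.re := by
  rw [← Complex.ofReal_pow, Complex.re_ofReal_mul]

/-- pointwise expansion of ‖-w + x²z‖² -/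
lemma Lf (x : ℝ) (z w : ℂ) :
    ‖-w + (x : ℂ) ^ 2 * z‖ ^ 2
      = ‖w‖ ^ 2 + x ^ 4 * ‖z‖ ^ 2 - 2 * (x ^ 2 * (w * conj z).re) := by
  have h : (-w + (x : ℂ) ^ 2 * z) * conj (-w + (x : ℂ) ^ 2 * z)
      = w * conj w + (x : ℂ) ^ 4 * (z * conj z)
        - (x : ℂ) ^ 2 * (w * conj z + z * conj w) := by
    simp only [map_add, map_neg, map_mul, map_pow, Complex.conj_ofReal]
    ring
  have := congrArg Complex.re h
  rw [L1] at this
  rw [this, Complex.sub_re, Complex.add_re, L1, L3, L3, L1, L2]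
  ring

/-- pointwise re of f·conj ψ -/
lemma Lg (x : ℝ) (z w : ℂ) :
    ((-w + (x : ℂ) ^ 2 * z) * conj z).re = -((w * conj z).re) + x ^ 2 * ‖z‖ ^ 2 := by
  have h : (-w + (x : ℂ) ^ 2 * z) * conj z = -(w * conj z) + (x : ℂ) ^ 2 * (z * conj z) := by
    ring
  rw [h, Complex.add_re, Complex.neg_re, L3, L1]


set_option maxHeartbeats 1000000 in
lemma core (ψ : 𝓢(ℝ, ℂ)) :
    (∫ x : ℝ, ‖ψ x‖ ^ 2) ≤ (∫ x : ℝ, ‖-(deriv (deriv (⇑ψ)) x) + (x : ℂ) ^ 2 * ψ x‖ ^ 2) ∧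
    (∫ x : ℝ, (1 + x ^ 2) * ‖deriv (⇑ψ) x‖ ^ 2)
      ≤ ∫ x : ℝ, (2 * ‖-(deriv (deriv (⇑ψ)) x) + (x : ℂ) ^ 2 * ψ x‖) ^ 2 := by
  have hψ1 : deriv (⇑ψ) = ⇑(derivCLM ℝ ℂ ψ) := by
    funext x; exact (derivCLM_apply ℝ ψ x).symm
  set ψ1 : 𝓢(ℝ, ℂ) := derivCLM ℝ ℂ ψ
  have hψ2 : deriv (⇑ψ1) = ⇑(derivCLM ℝ ℂ ψ1) := by
    funext x; exact (derivCLM_apply ℝ ψ1 x).symm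
  set ψ2 : 𝓢(ℝ, ℂ) := derivCLM ℝ ℂ ψ1
  have hdd : deriv (deriv (⇑ψ)) = ⇑ψ2 := by rw [hψ1, hψ2]
  -- integrability instances
  have iA : Integrable (fun x : ℝ => ‖ψ x‖ ^ 2) := by simpa using intSq 0 ψ
  have iB : Integrable (fun x : ℝ => ‖ψ1 x‖ ^ 2) := by simpa using intSq 0 ψ1
  have iC : Integrable (fun x : ℝ => x ^ 2 * ‖ψ x‖ ^ 2) := by simpa using intSq 1 ψ
  have iD : Integrable (fun x : ℝ => x ^ 2 * ‖ψ1 x‖ ^ 2) := by simpa using intSq 1 ψ1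
  have iE : Integrable (fun x : ℝ => ‖ψ2 x‖ ^ 2) := by simpa using intSq 0 ψ2
  have iQ : Integrable (fun x : ℝ => x ^ 4 * ‖ψ x‖ ^ 2) := by simpa using intSq 2 ψ
  have iR : Integrable (fun x : ℝ => x * (ψ1 x * conj (ψ x)).re) := by
    simpa using intRe 1 ψ1 ψ
  have iS : Integrable (fun x : ℝ => (ψ2 x * conj (ψ x)).re) := by
    simpa using intRe 0 ψ2 ψ
  have iT : Integrable (fun x : ℝ => x ^ 2 * (ψ2 x * conj (ψ x)).re) := intRe 2 ψ2 ψ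
  set a := ∫ x : ℝ, ‖ψ x‖ ^ 2 with ha
  set b := ∫ x : ℝ, ‖ψ1 x‖ ^ 2 with hb
  set c := ∫ x : ℝ, x ^ 2 * ‖ψ x‖ ^ 2 with hc
  set d := ∫ x : ℝ, x ^ 2 * ‖ψ1 x‖ ^ 2 with hd
  set e := ∫ x : ℝ, ‖ψ2 x‖ ^ 2 with he
  set q := ∫ x : ℝ, x ^ 4 * ‖ψ x‖ ^ 2 with hq
  set r := ∫ x : ℝ, x * (ψ1 x * conj (ψ x)).re with hr
  set s := ∫ x : ℝ, (ψ2 x * conj (ψ x)).re with hs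
  set t := ∫ x : ℝ, x ^ 2 * (ψ2 x * conj (ψ x)).re with ht
  -- identity A : a + 2r = 0
  have idA : a + 2 * r = 0 := by
    obtain ⟨hint, hI⟩ := ibp 0 ψ ψ
    have hre : (∫ x : ℝ, ((0 + 1 : ℂ) * (x : ℂ) ^ 0 * (ψ x * conj (ψ x))
        + (x : ℂ) ^ (0 + 1) * (deriv ψ x * conj (ψ x) + ψ x * conj (deriv ψ x))).re) = 0 := by
      have h' := integral_re hint
      rw [hI] at h'
      simpa using h'
    have hcong : (∫ x : ℝ, ((0 + 1 : ℂ) * (x : ℂ) ^ 0 * (ψ x * conj (ψ x))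
        + (x : ℂ) ^ (0 + 1) * (deriv ψ x * conj (ψ x) + ψ x * conj (deriv ψ x))).re)
        = ∫ x : ℝ, (‖ψ x‖ ^ 2 + 2 * (x * (ψ1 x * conj (ψ x)).re)) := by
      apply integral_congr_ae
      filter_upwards with x
      rw [hψ1]
      simp only [zero_add, pow_zero, pow_one, one_mul, Complex.add_re]
      rw [L1]
      have h2 : ((x : ℂ) * (ψ1 x * conj (ψ x) + ψ x * conj (ψ1 x))).re
          = x * (ψ1 x * conj (ψ x) + ψ x * conj (ψ1 x)).re := Complex.re_ofReal_mul x _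
      rw [h2, L2]
      ring
    rw [hcong] at hre
    have i2 : Integrable (fun x : ℝ => 2 * (x * (ψ1 x * conj (ψ x)).re)) := iR.const_mul 2
    rw [integral_add iA i2, integral_const_mul] at hre
    linarith
  -- identity B : s + b = 0
  have idB : s + b = 0 := by
    obtain ⟨hint, hI⟩ := ibp0 ψ1 ψ
    have hre : (∫ x : ℝ, (deriv ψ1 x * conj (ψ x) + ψ1 x * conj (deriv ψ x)).re) = 0 := by
      have h' := integral_re hint
      rw [hI] at h'
      simpa using h'
    have hcong : (∫ x : ℝ, (deriv ψ1 x * conj (ψ x) + ψ1 x * conj (deriv ψ x)).re)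
        = ∫ x : ℝ, ((ψ2 x * conj (ψ x)).re + ‖ψ1 x‖ ^ 2) := by
      apply integral_congr_ae
      filter_upwards with x
      rw [hψ1, hψ2, Complex.add_re, L1]
    rw [hcong, integral_add iS iB] at hre
    linarith
  -- identity C : 2r + t + d = 0
  have idC : 2 * r + t + d = 0 := by
    obtain ⟨hint, hI⟩ := ibp 1 ψ1 ψ
    have hre : (∫ x : ℝ, ((1 + 1 : ℂ) * (x : ℂ) ^ 1 * (ψ1 x * conj (ψ x))
        + (x : ℂ) ^ (1 + 1) * (deriv ψ1 x * conj (ψ x) + ψ1 x * conj (deriv ψ x))).re) = 0 := by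
      have h' := integral_re hint
      rw [hI] at h'
      simpa using h'
    have hcong : (∫ x : ℝ, ((1 + 1 : ℂ) * (x : ℂ) ^ 1 * (ψ1 x * conj (ψ x))
        + (x : ℂ) ^ (1 + 1) * (deriv ψ1 x * conj (ψ x) + ψ1 x * conj (deriv ψ x))).re)
        = ∫ x : ℝ, (2 * (x * (ψ1 x * conj (ψ x)).re)
            + (x ^ 2 * (ψ2 x * conj (ψ x)).re + x ^ 2 * ‖ψ1 x‖ ^ 2)) := by
      apply integral_congr_ae
      filter_upwards with x
      rw [hψ1, hψ2]
      simp only [pow_one, Complex.add_re]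
      have e1 : ((1 + 1 : ℂ) * (x : ℂ) * (ψ1 x * conj (ψ x))).re
          = 2 * (x * (ψ1 x * conj (ψ x)).re) := by
        have h3 : (1 + 1 : ℂ) * (x : ℂ) * (ψ1 x * conj (ψ x))
            = ((2 * x : ℝ) : ℂ) * (ψ1 x * conj (ψ x)) := by push_cast; ring
        rw [h3, Complex.re_ofReal_mul]; ring
      have e2 : ((x : ℂ) ^ (1 + 1) * (ψ2 x * conj (ψ x) + ψ1 x * conj (ψ1 x))).re
          = x ^ 2 * (ψ2 x * conj (ψ x)).re + x ^ 2 * ‖ψ1 x‖ ^ 2 := by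
        rw [L3, Complex.add_re, L1]
        ring
      rw [e1, e2]
    rw [hcong] at hre
    have i2 : Integrable (fun x : ℝ => 2 * (x * (ψ1 x * conj (ψ x)).re)) := iR.const_mul 2
    have i3 : Integrable (fun x : ℝ => x ^ 2 * (ψ2 x * conj (ψ x)).re + x ^ 2 * ‖ψ1 x‖ ^ 2) :=
      iT.add iD
    rw [integral_add i2 i3, integral_const_mul, integral_add iT iD] at hre
    linarith
  -- integrability of ‖f‖²
  have iF : Integrable (fun x : ℝ => ‖-(ψ2 x) + (x : ℂ) ^ 2 * ψ x‖ ^ 2) := by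
    have i4 : Integrable (fun x : ℝ => ‖ψ2 x‖ ^ 2 + x ^ 4 * ‖ψ x‖ ^ 2
        - 2 * (x ^ 2 * (ψ2 x * conj (ψ x)).re)) := (iE.add iQ).sub (iT.const_mul 2)
    refine i4.congr ?_
    filter_upwards with x
    rw [Lf]
  set F := ∫ x : ℝ, ‖-(ψ2 x) + (x : ℂ) ^ 2 * ψ x‖ ^ 2 with hF
  -- identity F : F = e + q - 2t
  have idF : F = e + q - 2 * t := by
    have h5 : (∫ x : ℝ, ‖-(ψ2 x) + (x : ℂ) ^ 2 * ψ x‖ ^ 2)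
        = ∫ x : ℝ, (‖ψ2 x‖ ^ 2 + x ^ 4 * ‖ψ x‖ ^ 2 - 2 * (x ^ 2 * (ψ2 x * conj (ψ x)).re)) := by
      apply integral_congr_ae
      filter_upwards with x
      rw [Lf]
    have i5 : Integrable (fun x : ℝ => ‖ψ2 x‖ ^ 2 + x ^ 4 * ‖ψ x‖ ^ 2) := iE.add iQ
    have i6 : Integrable (fun x : ℝ => 2 * (x ^ 2 * (ψ2 x * conj (ψ x)).re)) := iT.const_mul 2
    rw [hF, h5, integral_sub i5 i6, integral_add iE iQ, integral_const_mul]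
  have hc0 : 0 ≤ c := by
    rw [hc]; exact integral_nonneg (fun x => by positivity)
  have he0 : 0 ≤ e := by
    rw [he]; exact integral_nonneg (fun x => by positivity)
  have hq0 : 0 ≤ q := by
    rw [hq]; exact integral_nonneg (fun x => by positivity)
  have hF0 : 0 ≤ F := by
    rw [hF]; exact integral_nonneg (fun x => by positivity)
  -- inequality (i) : a ≤ b + c
  have ineq1 : a ≤ b + c := by
    have h1 : a = ∫ x : ℝ, (-2) * (x * (ψ1 x * conj (ψ x)).re) := by
      rw [integral_const_mul]; linarith
    have i7 : Integrable (fun x : ℝ => (-2) * (x * (ψ1 x * conj (ψ x)).re)) :=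
      iR.const_mul (-2)
    have i8 : Integrable (fun x : ℝ => ‖ψ1 x‖ ^ 2 + x ^ 2 * ‖ψ x‖ ^ 2) := iB.add iC
    have h2 : (∫ x : ℝ, (-2) * (x * (ψ1 x * conj (ψ x)).re))
        ≤ ∫ x : ℝ, (‖ψ1 x‖ ^ 2 + x ^ 2 * ‖ψ x‖ ^ 2) := by
      apply integral_mono i7 i8
      intro x
      dsimp only
      have habs : |(ψ1 x * conj (ψ x)).re| ≤ ‖ψ1 x‖ * ‖ψ x‖ := by
        calc |(ψ1 x * conj (ψ x)).re| ≤ ‖ψ1 x * conj (ψ x)‖ := Complex.abs_re_le_norm _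
          _ = ‖ψ1 x‖ * ‖ψ x‖ := by simp [norm_mul]
      have h3 : |x * (ψ1 x * conj (ψ x)).re| ≤ |x| * (‖ψ1 x‖ * ‖ψ x‖) := by
        rw [abs_mul]; gcongr
      nlinarith [sq_nonneg (|x| * ‖ψ x‖ - ‖ψ1 x‖), sq_abs x,
        neg_abs_le (x * (ψ1 x * conj (ψ x)).re),
        norm_nonneg (ψ1 x), norm_nonneg (ψ x), abs_nonneg x]
    rw [integral_add iB iC] at h2
    linarith
  -- inequality (ii) : b + c ≤ (F + a)/2
  have ineq2 : b + c ≤ (F + a) / 2 := by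
    have i12 : Integrable (fun x : ℝ => -((ψ2 x * conj (ψ x)).re)) := iS.neg
    have i9 : Integrable (fun x : ℝ => -((ψ2 x * conj (ψ x)).re) + x ^ 2 * ‖ψ x‖ ^ 2) :=
      i12.add iC
    have hfc : (∫ x : ℝ, ((-(ψ2 x) + (x : ℂ) ^ 2 * ψ x) * conj (ψ x)).re) = -s + c := by
      have h6 : (∫ x : ℝ, ((-(ψ2 x) + (x : ℂ) ^ 2 * ψ x) * conj (ψ x)).re)
          = ∫ x : ℝ, (-((ψ2 x * conj (ψ x)).re) + x ^ 2 * ‖ψ x‖ ^ 2) := by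
        apply integral_congr_ae
        filter_upwards with x
        rw [Lg]
      rw [h6, integral_add i12 iC, integral_neg]
    have i10 : Integrable (fun x : ℝ =>
        (1 / 2 : ℝ) * (‖-(ψ2 x) + (x : ℂ) ^ 2 * ψ x‖ ^ 2 + ‖ψ x‖ ^ 2)) :=
      (iF.add iA).const_mul (1 / 2)
    have i11 : Integrable (fun x : ℝ => ((-(ψ2 x) + (x : ℂ) ^ 2 * ψ x) * conj (ψ x)).re) := by
      refine i9.congr ?_
      filter_upwards with x
      rw [Lg]
    have hle : (∫ x : ℝ, ((-(ψ2 x) + (x : ℂ) ^ 2 * ψ x) * conj (ψ x)).re)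
        ≤ ∫ x : ℝ, (1 / 2 : ℝ) * (‖-(ψ2 x) + (x : ℂ) ^ 2 * ψ x‖ ^ 2 + ‖ψ x‖ ^ 2) := by
      apply integral_mono i11 i10
      intro x
      dsimp only
      have h1 : ((-(ψ2 x) + (x : ℂ) ^ 2 * ψ x) * conj (ψ x)).re
          ≤ ‖-(ψ2 x) + (x : ℂ) ^ 2 * ψ x‖ * ‖ψ x‖ := by
        calc ((-(ψ2 x) + (x : ℂ) ^ 2 * ψ x) * conj (ψ x)).re
            ≤ |((-(ψ2 x) + (x : ℂ) ^ 2 * ψ x) * conj (ψ x)).re| := le_abs_self _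
          _ ≤ ‖(-(ψ2 x) + (x : ℂ) ^ 2 * ψ x) * conj (ψ x)‖ := Complex.abs_re_le_norm _
          _ = ‖-(ψ2 x) + (x : ℂ) ^ 2 * ψ x‖ * ‖ψ x‖ := by simp [norm_mul]
      nlinarith [sq_nonneg (‖-(ψ2 x) + (x : ℂ) ^ 2 * ψ x‖ - ‖ψ x‖)]
    rw [integral_const_mul, integral_add iF iA, hfc] at hle
    linarith [idB]
  have hAF : a ≤ F := by linarith
  have hbF : b ≤ F := by linarith
  have hdF : 2 * d ≤ 3 * F := by
    have ht' : t = a - d := by linarith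
    have h7 : F = e + q - 2 * a + 2 * d := by rw [idF, ht']; ring
    linarith
  constructor
  · rw [hdd]; exact hAF
  · have hsplit : (∫ x : ℝ, (1 + x ^ 2) * ‖deriv (⇑ψ) x‖ ^ 2) = b + d := by
      rw [hψ1]
      have h8 : (∫ x : ℝ, (1 + x ^ 2) * ‖ψ1 x‖ ^ 2)
          = ∫ x : ℝ, (‖ψ1 x‖ ^ 2 + x ^ 2 * ‖ψ1 x‖ ^ 2) := by
        apply integral_congr_ae; filter_upwards with x; ring_nf
      rw [h8, integral_add iB iD]
    have h4F : (∫ x : ℝ, (2 * ‖-(deriv (deriv (⇑ψ)) x) + (x : ℂ) ^ 2 * ψ x‖) ^ 2) = 4 * F := by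
      rw [hdd, hF, ← integral_const_mul]
      apply integral_congr_ae; filter_upwards with x; ring
    rw [hsplit, h4F]
    linarith

lemma coe_deriv (ψ : 𝓢(ℝ, ℂ)) : deriv (⇑ψ) = ⇑(derivCLM ℝ ℂ ψ) := by
  funext x; exact (derivCLM_apply ℝ ψ x).symm

lemma intF (ψ : 𝓢(ℝ, ℂ)) :
    Integrable (fun x : ℝ => ‖-(deriv (deriv (⇑ψ)) x) + (x : ℂ) ^ 2 * ψ x‖ ^ 2) := by
  have hdd : deriv (deriv (⇑ψ)) = ⇑(derivCLM ℝ ℂ (derivCLM ℝ ℂ ψ)) := by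
    rw [coe_deriv, coe_deriv]
  rw [hdd]
  set ψ2 := derivCLM ℝ ℂ (derivCLM ℝ ℂ ψ)
  have iE : Integrable (fun x : ℝ => ‖ψ2 x‖ ^ 2) := by simpa using intSq 0 ψ2
  have iQ : Integrable (fun x : ℝ => x ^ 4 * ‖ψ x‖ ^ 2) := by simpa using intSq 2 ψ
  have iT : Integrable (fun x : ℝ => x ^ 2 * (ψ2 x * conj (ψ x)).re) := intRe 2 ψ2 ψ
  have i4 : Integrable (fun x : ℝ => ‖ψ2 x‖ ^ 2 + x ^ 4 * ‖ψ x‖ ^ 2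
      - 2 * (x ^ 2 * (ψ2 x * conj (ψ x)).re)) := (iE.add iQ).sub (iT.const_mul 2)
  refine i4.congr ?_
  filter_upwards with x
  rw [Lf]

lemma int_wpsi (ψ : 𝓢(ℝ, ℂ)) :
    Integrable (fun x : ℝ => (1 + x ^ 2) * ‖deriv (⇑ψ) x‖ ^ 2) := by
  rw [coe_deriv]
  set ψ1 := derivCLM ℝ ℂ ψ
  have iB : Integrable (fun x : ℝ => ‖ψ1 x‖ ^ 2) := by simpa using intSq 0 ψ1
  have iD : Integrable (fun x : ℝ => x ^ 2 * ‖ψ1 x‖ ^ 2) := by simpa using intSq 1 ψ1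
  refine (iB.add iD).congr ?_
  filter_upwards with x
  simp only [Pi.add_apply]
  ring

/-- comparison of L² seminorms from comparison of square integrals -/
lemma eLp_le {g h : ℝ → ℂ} (hg : MemLp g 2 volume) (hh : MemLp h 2 volume)
    (hint : (∫ x : ℝ, ‖g x‖ ^ 2) ≤ ∫ x : ℝ, ‖h x‖ ^ 2) :
    eLpNorm g 2 volume ≤ eLpNorm h 2 volume := by
  rw [hg.eLpNorm_eq_integral_rpow_norm two_ne_zero ENNReal.ofNat_ne_top,
    hh.eLpNorm_eq_integral_rpow_norm two_ne_zero ENNReal.ofNat_ne_top]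
  apply ENNReal.ofReal_le_ofReal
  have h2 : (2 : ℝ≥0∞).toReal = (2 : ℝ) := by simp
  have e1 : ∀ g' : ℝ → ℂ, (∫ x : ℝ, ‖g' x‖ ^ (2 : ℝ≥0∞).toReal) = ∫ x : ℝ, ‖g' x‖ ^ 2 := by
    intro g'
    apply integral_congr_ae
    filter_upwards with x
    rw [h2]
    rw [Real.rpow_two]
  rw [e1, e1]
  apply Real.rpow_le_rpow ?_ hint ?_
  · positivity
  · positivity

lemma memLp2 {g : ℝ → ℂ} (hc : Continuous g) (hi : Integrable (fun x : ℝ => ‖g x‖ ^ 2)) :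
    MemLp g 2 volume :=
  (memLp_two_iff_integrable_sq_norm hc.aestronglyMeasurable).mpr hi

end Stmt8

open MeasureTheory Stmt8 Filter SchwartzMap Topology ComplexConjugate

/-- for `V ∈ C²(ℝ,ℝ)` with `|V''| ≤ M` and a Schwartz function `ψ`, the
commutator `[V(Q), P²]ψ = (Vψ)'' - Vψ'' = V''ψ + 2V'ψ'` (equivalently
`-i[V(Q),P²] = 2V'(Q)P - iV''(Q)`), and its `L²` norm is bounded by `ν ‖Nψ‖` with
`ν = 5‖V''‖_∞ + 4|V'(0)|` and `Nψ = -ψ'' + x²ψ` the harmonic oscillator. -/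
theorem stmt8 (V : ℝ → ℝ) (hV : ContDiff ℝ 2 V) (M : ℝ)
    (hM : ∀ x : ℝ, |deriv (deriv V) x| ≤ M)
    (ψ : SchwartzMap ℝ ℂ) :
    (∀ x : ℝ,
      deriv (deriv (fun y : ℝ => (V y : ℂ) * ψ y)) x - (V x : ℂ) * deriv (deriv (⇑ψ)) x =
        Complex.ofReal (deriv (deriv V) x) * ψ x +
          2 * Complex.ofReal (deriv V x) * deriv (⇑ψ) x) ∧
    eLpNorm
        (fun x : ℝ => Complex.ofReal (deriv (deriv V) x) * ψ x +
          2 * Complex.ofReal (deriv V x) * deriv (⇑ψ) x)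
        2 volume ≤
      ENNReal.ofReal (5 * M + 4 * |deriv V 0|) *
        eLpNorm (fun x : ℝ => -(deriv (deriv (⇑ψ)) x) + (x : ℂ) ^ 2 * ψ x) 2 volume := by
  -- smoothness facts about V
  have h2 : ContDiff ℝ ((1 : ℕ) + 1) V := by exact_mod_cast hV
  obtain ⟨hVd1, -, hV1⟩ := contDiff_succ_iff_deriv.mp h2
  obtain ⟨hVd2, hVc2⟩ := contDiff_one_iff_deriv.mp hV1
  have hM0 : 0 ≤ M := le_trans (abs_nonneg _) (hM 0)
  -- derivative facts
  have hψd : ∀ x : ℝ, HasDerivAt (⇑ψ) (deriv (⇑ψ) x) x := fun x =>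
    (ψ.differentiableAt).hasDerivAt
  have hψd2 : ∀ x : ℝ, HasDerivAt (deriv (⇑ψ)) (deriv (deriv (⇑ψ)) x) x := by
    intro x
    have : Differentiable ℝ (deriv (⇑ψ)) := by
      rw [coe_deriv]; exact (derivCLM ℝ ℂ ψ).differentiable
    exact (this x).hasDerivAt
  have hVc : ∀ y : ℝ, HasDerivAt (fun y : ℝ => (V y : ℂ)) ((deriv V y : ℝ) : ℂ) y := fun y =>
    ((hVd1 y).hasDerivAt).ofReal_comp
  have hVc' : ∀ y : ℝ, HasDerivAt (fun y : ℝ => ((deriv V y : ℝ) : ℂ))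
      ((deriv (deriv V) y : ℝ) : ℂ) y := fun y => ((hVd2 y).hasDerivAt).ofReal_comp
  have hprod : ∀ y : ℝ, HasDerivAt (fun y : ℝ => (V y : ℂ) * ψ y)
      (((deriv V y : ℝ) : ℂ) * ψ y + (V y : ℂ) * deriv (⇑ψ) y) y := fun y =>
    (hVc y).mul (hψd y)
  have hd1 : deriv (fun y : ℝ => (V y : ℂ) * ψ y)
      = fun y : ℝ => ((deriv V y : ℝ) : ℂ) * ψ y + (V y : ℂ) * deriv (⇑ψ) y :=
    funext fun y => (hprod y).deriv
  have part1 : ∀ x : ℝ,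
      deriv (deriv (fun y : ℝ => (V y : ℂ) * ψ y)) x - (V x : ℂ) * deriv (deriv (⇑ψ)) x =
        Complex.ofReal (deriv (deriv V) x) * ψ x +
          2 * Complex.ofReal (deriv V x) * deriv (⇑ψ) x := by
    intro x
    have hd2 : HasDerivAt (fun y : ℝ => ((deriv V y : ℝ) : ℂ) * ψ y + (V y : ℂ) * deriv (⇑ψ) y)
        ((((deriv (deriv V) x : ℝ) : ℂ) * ψ x + ((deriv V x : ℝ) : ℂ) * deriv (⇑ψ) x)
          + (((deriv V x : ℝ) : ℂ) * deriv (⇑ψ) x + (V x : ℂ) * deriv (deriv (⇑ψ)) x)) x :=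
      ((hVc' x).mul (hψd x)).add ((hVc x).mul (hψd2 x))
    rw [hd1, hd2.deriv]
    push_cast
    ring
  refine ⟨part1, ?_⟩
  -- Lipschitz bound on V'
  set w : ℝ := M + |deriv V 0| with hw
  have hw0 : 0 ≤ w := by positivity
  have hVlip : ∀ x : ℝ, |deriv V x| ≤ w * Real.sqrt (1 + x ^ 2) := by
    intro x
    have hmvt := Convex.norm_image_sub_le_of_norm_deriv_le (f := deriv V) (s := Set.univ)
      (C := M) (fun y _ => hVd2 y) (fun y _ => by simpa [Real.norm_eq_abs] using hM y)
      convex_univ (Set.mem_univ 0) (Set.mem_univ x)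
    rw [Real.norm_eq_abs, Real.norm_eq_abs, sub_zero] at hmvt
    have hsq := Real.sq_sqrt (show (0:ℝ) ≤ 1 + x ^ 2 by positivity)
    have hsn := Real.sqrt_nonneg (1 + x ^ 2)
    have hs1 : (1 : ℝ) ≤ Real.sqrt (1 + x ^ 2) := by
      nlinarith [sq_nonneg x, sq_nonneg (Real.sqrt (1 + x ^ 2) - 1)]
    have hs2 : |x| ≤ Real.sqrt (1 + x ^ 2) := by
      nlinarith [sq_abs x, abs_nonneg x, sq_nonneg (Real.sqrt (1 + x ^ 2) - |x|)]
    have h3 : |deriv V x| ≤ |deriv V 0| + M * |x| := by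
      have := abs_sub_abs_le_abs_sub (deriv V x) (deriv V 0)
      linarith
    calc |deriv V x| ≤ |deriv V 0| + M * |x| := h3
      _ ≤ |deriv V 0| * Real.sqrt (1 + x ^ 2) + M * Real.sqrt (1 + x ^ 2) := by
          gcongr
          · nlinarith [abs_nonneg (deriv V 0)]
      _ = w * Real.sqrt (1 + x ^ 2) := by rw [hw]; ring
  -- the two summands
  set g1 : ℝ → ℂ := fun x => Complex.ofReal (deriv (deriv V) x) * ψ x with hg1
  set g2 : ℝ → ℂ := fun x => 2 * Complex.ofReal (deriv V x) * deriv (⇑ψ) x with hg2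
  set fN : ℝ → ℂ := fun x => -(deriv (deriv (⇑ψ)) x) + (x : ℂ) ^ 2 * ψ x with hfN
  have hψ1c : Continuous (deriv (⇑ψ)) := by
    rw [coe_deriv]; exact (derivCLM ℝ ℂ ψ).continuous
  have hψ2c : Continuous (deriv (deriv (⇑ψ))) := by
    rw [coe_deriv, coe_deriv]; exact (derivCLM ℝ ℂ (derivCLM ℝ ℂ ψ)).continuous
  have hg1c : Continuous g1 :=
    (Complex.continuous_ofReal.comp hVc2).mul ψ.continuous
  have hg2c : Continuous g2 :=
    (continuous_const.mul (Complex.continuous_ofReal.comp hV1.continuous)).mul hψ1c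
  have hfNc : Continuous fN :=
    (hψ2c.neg).add ((Complex.continuous_ofReal.pow 2).mul ψ.continuous)
  -- MemLp facts
  have iA : Integrable (fun x : ℝ => ‖ψ x‖ ^ 2) := by simpa using intSq 0 ψ
  have memψ : MemLp (⇑ψ) 2 volume := memLp2 ψ.continuous iA
  have memfN : MemLp fN 2 volume := memLp2 hfNc (intF ψ)
  have hψF : eLpNorm (⇑ψ) 2 volume ≤ eLpNorm fN 2 volume := by
    refine eLp_le memψ memfN ?_
    simpa only [hfN] using (core ψ).1
  -- g1 bound
  have hb1 : eLpNorm g1 2 volume ≤ ENNReal.ofReal M * eLpNorm fN 2 volume := by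
    have hmono : ∀ x : ℝ, ‖g1 x‖ ≤ ‖(M : ℝ) • ψ x‖ := by
      intro x
      rw [norm_smul, Real.norm_eq_abs, abs_of_nonneg hM0, hg1]
      calc ‖Complex.ofReal (deriv (deriv V) x) * ψ x‖ = |deriv (deriv V) x| * ‖ψ x‖ := by
            rw [norm_mul, Complex.norm_real, Real.norm_eq_abs]
        _ ≤ M * ‖ψ x‖ := by gcongr; exact hM x
    calc eLpNorm g1 2 volume ≤ eLpNorm (fun x : ℝ => (M : ℝ) • ψ x) 2 volume :=
          eLpNorm_mono hmono
      _ = ‖(M : ℝ)‖ₑ * eLpNorm (⇑ψ) 2 volume := eLpNorm_const_smul (M : ℝ) (⇑ψ) 2 volume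
      _ = ENNReal.ofReal M * eLpNorm (⇑ψ) 2 volume := by
          rw [← Real.enorm_eq_ofReal hM0]
      _ ≤ ENNReal.ofReal M * eLpNorm fN 2 volume := by gcongr
  -- g2 bound
  have hsqc : Continuous (fun x : ℝ => Real.sqrt (1 + x ^ 2)) :=
    Real.continuous_sqrt.comp (continuous_const.add (continuous_pow 2))
  have i3 : Integrable (fun x : ℝ => ‖Real.sqrt (1 + x ^ 2) • deriv (⇑ψ) x‖ ^ 2) := by
    refine (int_wpsi ψ).congr ?_
    filter_upwards with x
    rw [norm_smul, Real.norm_eq_abs, abs_of_nonneg (Real.sqrt_nonneg _), mul_pow,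
      Real.sq_sqrt (by positivity)]
  have mem3 : MemLp (fun x : ℝ => Real.sqrt (1 + x ^ 2) • deriv (⇑ψ) x) 2 volume :=
    memLp2 (hsqc.smul hψ1c) i3
  have mem2f : MemLp (fun x : ℝ => (2 : ℝ) • fN x) 2 volume := memfN.const_smul (2 : ℝ)
  have h32 : eLpNorm (fun x : ℝ => Real.sqrt (1 + x ^ 2) • deriv (⇑ψ) x) 2 volume
      ≤ eLpNorm (fun x : ℝ => (2 : ℝ) • fN x) 2 volume := by
    refine eLp_le mem3 mem2f ?_
    have e1 : (∫ x : ℝ, ‖Real.sqrt (1 + x ^ 2) • deriv (⇑ψ) x‖ ^ 2)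
        = ∫ x : ℝ, (1 + x ^ 2) * ‖deriv (⇑ψ) x‖ ^ 2 := by
      apply integral_congr_ae
      filter_upwards with x
      rw [norm_smul, Real.norm_eq_abs, abs_of_nonneg (Real.sqrt_nonneg _), mul_pow,
        Real.sq_sqrt (by positivity)]
    have e2 : (∫ x : ℝ, ‖(2 : ℝ) • fN x‖ ^ 2) = ∫ x : ℝ, (2 * ‖fN x‖) ^ 2 := by
      apply integral_congr_ae
      filter_upwards with x
      rw [norm_smul, Real.norm_eq_abs]
      norm_num
    rw [e1, e2]
    simpa only [hfN] using (core ψ).2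
  have hb2 : eLpNorm g2 2 volume ≤ ENNReal.ofReal (4 * w) * eLpNorm fN 2 volume := by
    have hmono2 : ∀ x : ℝ, ‖g2 x‖
        ≤ ‖((2 * w : ℝ)) • (Real.sqrt (1 + x ^ 2) • deriv (⇑ψ) x)‖ := by
      intro x
      rw [hg2, norm_smul, norm_smul, Real.norm_eq_abs, Real.norm_eq_abs,
        abs_of_nonneg (by positivity : (0:ℝ) ≤ 2 * w), abs_of_nonneg (Real.sqrt_nonneg _)]
      have : ‖2 * Complex.ofReal (deriv V x) * deriv (⇑ψ) x‖
          = 2 * |deriv V x| * ‖deriv (⇑ψ) x‖ := by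
        rw [norm_mul, norm_mul, Complex.norm_real, Real.norm_eq_abs]
        norm_num
      rw [this]
      have h5 := hVlip x
      have h6 := Real.sqrt_nonneg (1 + x ^ 2)
      nlinarith [norm_nonneg (deriv (⇑ψ) x), abs_nonneg (deriv V x)]
    calc eLpNorm g2 2 volume
        ≤ eLpNorm (fun x : ℝ => ((2 * w : ℝ)) • (Real.sqrt (1 + x ^ 2) • deriv (⇑ψ) x)) 2
            volume := eLpNorm_mono hmono2
      _ = ‖(2 * w : ℝ)‖ₑ
            * eLpNorm (fun x : ℝ => Real.sqrt (1 + x ^ 2) • deriv (⇑ψ) x) 2 volume :=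
          eLpNorm_const_smul (2 * w : ℝ) (fun x : ℝ => Real.sqrt (1 + x ^ 2) • deriv (⇑ψ) x) 2 volume
      _ ≤ ENNReal.ofReal (2 * w) * eLpNorm (fun x : ℝ => (2 : ℝ) • fN x) 2 volume := by
          rw [← Real.enorm_eq_ofReal (by positivity : (0:ℝ) ≤ 2 * w)]
          gcongr
      _ = ENNReal.ofReal (2 * w) * (ENNReal.ofReal 2 * eLpNorm fN 2 volume) := by
          have h7 : eLpNorm (fun x : ℝ => (2 : ℝ) • fN x) 2 volume
              = ‖(2 : ℝ)‖ₑ * eLpNorm fN 2 volume := eLpNorm_const_smul (2 : ℝ) fN 2 volume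
          rw [h7, ← Real.enorm_eq_ofReal (by norm_num : (0:ℝ) ≤ 2)]
      _ = ENNReal.ofReal (4 * w) * eLpNorm fN 2 volume := by
          rw [← mul_assoc, ← ENNReal.ofReal_mul (by positivity)]
          congr 1
          ring
  -- combine
  have hsum : eLpNorm (fun x : ℝ => g1 x + g2 x) 2 volume
      ≤ eLpNorm g1 2 volume + eLpNorm g2 2 volume :=
    eLpNorm_add_le hg1c.aestronglyMeasurable hg2c.aestronglyMeasurable one_le_two
  calc eLpNorm (fun x : ℝ => g1 x + g2 x) 2 volume
      ≤ eLpNorm g1 2 volume + eLpNorm g2 2 volume := hsum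
    _ ≤ ENNReal.ofReal M * eLpNorm fN 2 volume
        + ENNReal.ofReal (4 * w) * eLpNorm fN 2 volume := add_le_add hb1 hb2
    _ = (ENNReal.ofReal M + ENNReal.ofReal (4 * w)) * eLpNorm fN 2 volume := by
        rw [add_mul]
    _ = ENNReal.ofReal (5 * M + 4 * |deriv V 0|) * eLpNorm fN 2 volume := by
        rw [← ENNReal.ofReal_add hM0 (by positivity)]
        congr 1
        rw [hw]
        ring


end
end

section
/- Shirokov's norm comparison: let G be a positive self-adjoint operator on a separable Hilbert space H and let A : D(G^{1/2}) → H be a G^{1/2}-bounded operator. Define ‖A‖_E = sup{‖Aψ‖ : ‖ψ‖ ≤ 1, ‖G^{1/2}ψ‖² ≤ E} for E > 0. Then for E' ≥ E > 0, ‖A‖_E ≤ ‖A‖_{E'} ≤ √(E'/E)·‖A‖_E. -/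
/-- Shirokov's comparison of operator `E`-norms.  `G^{1/2}` is modelled by its
restriction `R : D →ₗ[ℂ] H` to its domain `D = D(G^{1/2})`, and `A : D →ₗ[ℂ] H` is a
`G^{1/2}`-bounded operator.  The operator `E`-norm is
`‖A‖_E = sup {‖Aψ‖ : ‖ψ‖ ≤ 1, ‖G^{1/2}ψ‖² ≤ E}`. -/
theorem stmt9 {H : Type*} [NormedAddCommGroup H] [InnerProductSpace ℂ H] [CompleteSpace H]
    (D : Submodule ℂ H) (R A : D →ₗ[ℂ] H)
    (hbdd : ∃ C : ℝ, ∀ ψ : D, ‖A ψ‖ ≤ C * (‖R ψ‖ + ‖(ψ : H)‖))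
    (E E' : ℝ) (hE : 0 < E) (hEE' : E ≤ E') :
    sSup {r | ∃ ψ : D, ‖(ψ : H)‖ ≤ 1 ∧ ‖R ψ‖ ^ 2 ≤ E ∧ r = ‖A ψ‖} ≤
        sSup {r | ∃ ψ : D, ‖(ψ : H)‖ ≤ 1 ∧ ‖R ψ‖ ^ 2 ≤ E' ∧ r = ‖A ψ‖} ∧
      sSup {r | ∃ ψ : D, ‖(ψ : H)‖ ≤ 1 ∧ ‖R ψ‖ ^ 2 ≤ E' ∧ r = ‖A ψ‖} ≤
        Real.sqrt (E' / E) *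
          sSup {r | ∃ ψ : D, ‖(ψ : H)‖ ≤ 1 ∧ ‖R ψ‖ ^ 2 ≤ E ∧ r = ‖A ψ‖} := by
  obtain ⟨C, hC⟩ := hbdd
  have hE' : 0 < E' := lt_of_lt_of_le hE hEE'
  set S : ℝ → Set ℝ := fun F => {r | ∃ ψ : D, ‖(ψ : H)‖ ≤ 1 ∧ ‖R ψ‖ ^ 2 ≤ F ∧ r = ‖A ψ‖}
    with hS
  -- nonemptiness via ψ = 0
  have hzero : ∀ F : ℝ, 0 ≤ F → (0 : ℝ) ∈ S F := by
    intro F hF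
    refine ⟨0, ?_, ?_, ?_⟩ <;> simp [hF]
  -- boundedness
  have hbdd' : ∀ F : ℝ, 0 ≤ F → BddAbove (S F) := by
    intro F hF
    refine ⟨max C 0 * (Real.sqrt F + 1), ?_⟩
    rintro r ⟨ψ, h1, h2, rfl⟩
    have hR : ‖R ψ‖ ≤ Real.sqrt F := by
      have := Real.sqrt_le_sqrt h2
      rwa [Real.sqrt_sq (norm_nonneg _)] at this
    have h3 := hC ψ
    have h4 : C * (‖R ψ‖ + ‖(ψ : H)‖) ≤ max C 0 * (Real.sqrt F + 1) := by
      have hx0 : (0:ℝ) ≤ ‖R ψ‖ + ‖(ψ : H)‖ := by positivity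
      have := le_max_left C 0
      nlinarith [le_max_right C (0:ℝ), norm_nonneg (R ψ), norm_nonneg ((ψ : H))]
    linarith
  have hsub : S E ⊆ S E' := by
    rintro r ⟨ψ, h1, h2, rfl⟩
    exact ⟨ψ, h1, le_trans h2 hEE', rfl⟩
  have hSnonneg : 0 ≤ sSup (S E) := le_csSup (hbdd' E hE.le) (hzero E hE.le)
  constructor
  · exact csSup_le_csSup (hbdd' E' hE'.le) ⟨0, hzero E hE.le⟩ hsub
  · apply Real.sSup_le
    · rintro r ⟨ψ, h1, h2, rfl⟩
      set t : ℝ := Real.sqrt (E / E') with ht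
      have ht0 : 0 < t := Real.sqrt_pos.2 (div_pos hE hE')
      have ht1 : t ≤ 1 := by
        rw [ht, show (1:ℝ) = Real.sqrt 1 by simp]
        exact Real.sqrt_le_sqrt (div_le_one_of_le₀ hEE' hE'.le)
      have htsq : t ^ 2 = E / E' := Real.sq_sqrt (div_pos hE hE').le
      have hmem : t * ‖A ψ‖ ∈ S E := by
        refine ⟨(t : ℂ) • ψ, ?_, ?_, ?_⟩
        · have : ‖(((t : ℂ) • ψ : D) : H)‖ = t * ‖(ψ : H)‖ := by
            simp [norm_smul, Complex.norm_real, abs_of_pos ht0]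
          rw [this]
          exact mul_le_one₀ ht1 (norm_nonneg _) h1
        · have hnorm : ‖R ((t : ℂ) • ψ)‖ = t * ‖R ψ‖ := by
            rw [map_smul, norm_smul]
            simp [Complex.norm_real, abs_of_pos ht0]
          rw [hnorm, mul_pow, htsq]
          calc E / E' * ‖R ψ‖ ^ 2 ≤ E / E' * E' := by
                exact mul_le_mul_of_nonneg_left h2 (div_pos hE hE').le
            _ = E := div_mul_cancel₀ E hE'.ne'
        · rw [map_smul, norm_smul]
          simp [Complex.norm_real, abs_of_pos ht0]
      have hle : t * ‖A ψ‖ ≤ sSup (S E) := le_csSup (hbdd' E hE.le) hmem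
      have hst : Real.sqrt (E' / E) * t = 1 := by
        rw [ht, ← Real.sqrt_mul (div_pos hE' hE).le]
        rw [div_mul_div_comm, mul_comm E' E, div_self (by positivity)]
        simp
      calc ‖A ψ‖ = Real.sqrt (E' / E) * (t * ‖A ψ‖) := by
            rw [← mul_assoc, hst, one_mul]
        _ ≤ Real.sqrt (E' / E) * sSup (S E) :=
            mul_le_mul_of_nonneg_left hle (Real.sqrt_nonneg _)
    · positivity
end

section
/- Let T be a symmetric operator on a separable Hilbert space and S ⊇ T an extension such that iS is dissipative (Im⟨ψ, Sψ⟩ ≤ 0 for ψ ∈ D(S)). Then T ⊆ S ⊆ T* and T ⊆ S* ⊆ T*. -/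
open scoped InnerProductSpace

private lemma quad_aux (b c : ℝ) (h : ∀ t : ℝ, c * t ^ 2 + b * t ≤ 0) : b = 0 := by
  have hd : (0:ℝ) < |c| + 1 := by positivity
  have h1 := h (b / (|c| + 1))
  have h2 : -|c| ≤ c := neg_abs_le c
  have h5 : (c * (b / (|c| + 1)) ^ 2 + b * (b / (|c| + 1))) * ((|c| + 1) * (|c| + 1)) ≤ 0 :=
    mul_nonpos_iff.mpr (Or.inr ⟨h1, (mul_pos hd hd).le⟩)
  have h4 : c * b ^ 2 + b ^ 2 * (|c| + 1) ≤ 0 := by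
    have hkey : c * b ^ 2 + b ^ 2 * (|c| + 1)
        = (c * (b / (|c| + 1)) ^ 2 + b * (b / (|c| + 1))) * ((|c| + 1) * (|c| + 1)) := by
      field_simp
    rw [hkey]; exact h5
  have hb2 : b ^ 2 ≤ 0 := by nlinarith [mul_le_mul_of_nonneg_right h2 (sq_nonneg b)]
  have : b ^ 2 = 0 := le_antisymm hb2 (sq_nonneg b)
  exact pow_eq_zero_iff two_ne_zero |>.mp this

/-- if `T` is a symmetric (densely defined) operator and `S ⊇ T` is an
extension such that `iS` is dissipative (`Im⟨ψ, Sψ⟩ ≤ 0`), then `T ⊆ S ⊆ T*` and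
`T ⊆ S* ⊆ T*`. -/
theorem stmt13 {H : Type*} [NormedAddCommGroup H] [InnerProductSpace ℂ H] [CompleteSpace H]
    (T S : H →ₗ.[ℂ] H) (hTdense : Dense (T.domain : Set H))
    (hsym : ∀ x y : T.domain, ⟪T x, (y : H)⟫_ℂ = ⟪(x : H), T y⟫_ℂ)
    (hTS : T ≤ S)
    (hdiss : ∀ ψ : S.domain, (⟪(ψ : H), S ψ⟫_ℂ).im ≤ 0) :
    T ≤ S ∧ S ≤ T.adjoint ∧ T ≤ S.adjoint ∧ S.adjoint ≤ T.adjoint := by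
  have hsub : (T.domain : Set H) ⊆ (S.domain : Set H) := hTS.1
  have hSdense : Dense (S.domain : Set H) := hTdense.mono hsub
  -- key: polarization-type argument from dissipativity
  have hb : ∀ (ψ φ : S.domain) (μ : ℂ), μ * (starRingEnd ℂ) μ = 1 →
      (⟪(ψ : H), S ψ⟫_ℂ).im = 0 →
      ((starRingEnd ℂ) μ * ⟪(φ : H), S ψ⟫_ℂ + μ * ⟪(ψ : H), S φ⟫_ℂ).im = 0 := by
    intro ψ φ μ hμ hψ
    apply quad_aux _ (⟪(φ : H), S φ⟫_ℂ).im
    intro t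
    have hco : ((ψ + ((t:ℂ) * μ) • φ : S.domain) : H) = (ψ : H) + ((t:ℂ) * μ) • (φ : H) := rfl
    have hS : S (ψ + ((t:ℂ) * μ) • φ) = S ψ + ((t:ℂ) * μ) • S φ := by
      rw [S.map_add, S.map_smul]
    have hinner : ⟪((ψ + ((t:ℂ) * μ) • φ : S.domain) : H), S (ψ + ((t:ℂ) * μ) • φ)⟫_ℂ
        = ⟪(ψ : H), S ψ⟫_ℂ
          + (t:ℂ) * ((starRingEnd ℂ) μ * ⟪(φ : H), S ψ⟫_ℂ + μ * ⟪(ψ : H), S φ⟫_ℂ)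
          + ((t ^ 2 : ℝ) : ℂ) * ⟪(φ : H), S φ⟫_ℂ := by
      rw [hco, hS, inner_add_left, inner_add_right, inner_add_right,
        inner_smul_left, inner_smul_right, inner_smul_left, inner_smul_right,
        map_mul, Complex.conj_ofReal]
      push_cast
      linear_combination ((t:ℂ) ^ 2 * ⟪(φ : H), S φ⟫_ℂ) * hμ
    have hd := hdiss (ψ + ((t:ℂ) * μ) • φ)
    rw [hinner] at hd
    simp only [Complex.add_im, Complex.im_ofReal_mul, hψ, zero_add] at hd
    simp only [Complex.add_im]
    nlinarith [hd]
  have hfa : T.IsFormalAdjoint S := by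
    intro x φ
    set ψ : S.domain := ⟨(x : H), hTS.1 x.2⟩ with hψdef
    have hTx : T x = S ψ := hTS.2 rfl
    have him : (⟪(ψ : H), S ψ⟫_ℂ).im = 0 := by
      rw [← hTx]
      have h2 : (starRingEnd ℂ) ⟪(x : H), T x⟫_ℂ = ⟪(x : H), T x⟫_ℂ := by
        rw [inner_conj_symm, hsym x x]
      exact Complex.conj_eq_iff_im.mp h2
    have h1 := hb ψ φ 1 (by simp) him
    have h2 := hb ψ φ Complex.I (by simp [Complex.mul_conj, Complex.normSq_I]) him
    simp only [map_one, one_mul, Complex.add_im] at h1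
    simp only [Complex.conj_I, Complex.add_im, Complex.mul_im, Complex.neg_im, Complex.neg_re,
      Complex.I_re, Complex.I_im] at h2
    have hgoal : ⟪(ψ : H), S φ⟫_ℂ = (starRingEnd ℂ) ⟪(φ : H), S ψ⟫_ℂ := by
      apply Complex.ext
      · simp only [Complex.conj_re]; linarith
      · simp only [Complex.conj_im]; linarith
    have hcoe : (ψ : H) = (x : H) := rfl
    rw [hTx, ← inner_conj_symm (S ψ) ((φ : H)), ← hcoe, hgoal]
  refine ⟨hTS, hfa.le_adjoint hTdense, (hfa.symm).le_adjoint hSdense, ?_⟩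
  have h3 : (S.adjoint).IsFormalAdjoint T := by
    intro y x
    have := (LinearPMap.adjoint_isFormalAdjoint hSdense) y ⟨(x : H), hTS.1 x.2⟩
    rwa [← hTS.2 rfl] at this
  exact (h3.symm).le_adjoint hTdense
end

section
/- Stability of Favard spaces under relatively bounded perturbation: let A₀ and A be generators of strongly continuous contraction semigroups on a Banach space X and let B = A - A₀ satisfy ‖Bx‖ ≤ a‖A₀x‖ + b‖x‖ for all x ∈ D(A₀), with a ≥ 0. Then for every α ∈ (0,1], F_α(A₀) ⊆ F_α(A), where F_α(A) = {x ∈ X : sup_{λ>0} ‖λ^α A(λ-A)^{-1}x‖ < ∞}. If moreover a < 1, then F_α(A₀) = F_α(A). -/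
/-- `R` is the bounded resolvent of the (possibly unbounded, partially defined) operator
`A` at `μ`, i.e. `R = (μ - A)⁻¹`. -/
def IsResolventAt {X : Type*} [NormedAddCommGroup X] [NormedSpace ℝ X]
    (A : X →ₗ.[ℝ] X) (μ : ℝ) (R : X →L[ℝ] X) : Prop :=
  (∀ y : X, ∃ h : R y ∈ A.domain, μ • R y - A ⟨R y, h⟩ = y) ∧
  ∀ x : A.domain, R (μ • (x : X) - A x) = x

/-- The Favard space `F_α(A) = {x : sup_{μ>0} ‖μ^α A(μ-A)⁻¹ x‖ < ∞}`, expressed through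
the resolvent family `R` of `A` via `A(μ-A)⁻¹ x = μ (μ-A)⁻¹ x - x`. -/
def Fav {X : Type*} [NormedAddCommGroup X] [NormedSpace ℝ X]
    (R : ℝ → X →L[ℝ] X) (α : ℝ) : Set X :=
  {x | ∃ M : ℝ, ∀ μ : ℝ, 0 < μ → μ ^ α * ‖μ • R μ x - x‖ ≤ M}

/-- stability of Favard spaces under relatively bounded perturbations.
`A₀` and `A` generate contraction semigroups (so their resolvents satisfy the
Hille–Yosida bound `‖(μ - ·)⁻¹‖ ≤ 1/μ` for `μ > 0`), and `B = A - A₀` is relatively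
`A₀`-bounded with bound `a`.  Then `F_α(A₀) ⊆ F_α(A)` for `α ∈ (0,1]`, with equality
when `a < 1`. -/
theorem stmt15 {X : Type*} [NormedAddCommGroup X] [NormedSpace ℝ X] [CompleteSpace X]
    (A₀ A : X →ₗ.[ℝ] X) (hle : A₀.domain ≤ A.domain)
    (a b : ℝ) (ha : 0 ≤ a) (hb : 0 ≤ b)
    (hrel : ∀ x : A₀.domain, ‖A ⟨(x : X), hle x.2⟩ - A₀ x‖ ≤ a * ‖A₀ x‖ + b * ‖(x : X)‖)
    (R₀ R : ℝ → X →L[ℝ] X)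
    (hR₀ : ∀ μ : ℝ, 0 < μ → IsResolventAt A₀ μ (R₀ μ) ∧ ‖R₀ μ‖ ≤ 1 / μ)
    (hR : ∀ μ : ℝ, 0 < μ → IsResolventAt A μ (R μ) ∧ ‖R μ‖ ≤ 1 / μ)
    (α : ℝ) (hα : α ∈ Set.Ioc (0 : ℝ) 1) :
    Fav R₀ α ⊆ Fav R α ∧ (a < 1 → Fav R₀ α = Fav R α) := by
  obtain ⟨hα0, hα1⟩ := hα
  -- small-μ bound, for any family with the Hille–Yosida bound
  have small : ∀ (S : ℝ → X →L[ℝ] X), (∀ μ : ℝ, 0 < μ → ‖S μ‖ ≤ 1 / μ) →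
      ∀ (x : X) (μ : ℝ), 0 < μ → μ ≤ 1 → μ ^ α * ‖μ • S μ x - x‖ ≤ 2 * ‖x‖ := by
    intro S hS x μ hμ h1
    have hp : μ ^ α ≤ 1 := Real.rpow_le_one hμ.le h1 hα0.le
    have hSx : ‖S μ x‖ ≤ (1 / μ) * ‖x‖ :=
      le_trans ((S μ).le_opNorm x) (by
        exact mul_le_mul_of_nonneg_right (hS μ hμ) (norm_nonneg x))
    have h2 : ‖μ • S μ x - x‖ ≤ 2 * ‖x‖ := by
      calc ‖μ • S μ x - x‖ ≤ ‖μ • S μ x‖ + ‖x‖ := norm_sub_le _ _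
        _ ≤ 2 * ‖x‖ := by
          rw [norm_smul, Real.norm_of_nonneg hμ.le]
          have h3 : μ * ‖S μ x‖ ≤ μ * (1 / μ * ‖x‖) := mul_le_mul_of_nonneg_left hSx hμ.le
          have h4 : μ * (1 / μ * ‖x‖) = ‖x‖ := by field_simp
          linarith
    nlinarith [norm_nonneg (μ • S μ x - x), norm_nonneg x,
      Real.rpow_nonneg hμ.le α]
  -- key resolvent-identity estimate
  have key : ∀ (x : X) (μ : ℝ), 0 < μ →
      ‖(μ • R μ x - x) - (μ • R₀ μ x - x)‖ ≤ a * ‖μ • R₀ μ x - x‖ + b * (‖x‖ / μ) := by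
    intro x μ hμ
    obtain ⟨⟨h0f, h0b⟩, h0n⟩ := hR₀ μ hμ
    obtain ⟨⟨hf, hbw⟩, hn⟩ := hR μ hμ
    obtain ⟨hmem, heq⟩ := h0f x
    set u := R₀ μ x with hu
    have hA0 : A₀ ⟨u, hmem⟩ = μ • u - x := by rw [← heq]; abel
    set w := A ⟨u, hle hmem⟩ - A₀ ⟨u, hmem⟩ with hw
    have hwb : ‖w‖ ≤ a * ‖μ • u - x‖ + b * ‖u‖ := by
      have := hrel ⟨u, hmem⟩
      simpa [hw, hA0] using this
    have hRu : R μ (μ • u - A ⟨u, hle hmem⟩) = u := hbw ⟨u, hle hmem⟩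
    have hAu : A ⟨u, hle hmem⟩ = w + (μ • u - x) := by rw [hw, hA0]; abel
    have hRux : R μ (x - w) = u := by
      rw [← hRu, hAu]; congr 1; abel
    have hdiff : R μ x - u = R μ w := by
      have : R μ x - R μ w = u := by rw [← map_sub]; exact hRux
      rw [← this]; abel
    have hkey : (μ • R μ x - x) - (μ • u - x) = μ • R μ w := by
      rw [← hdiff, smul_sub]; abel
    rw [hkey]
    have hnw : ‖μ • R μ w‖ ≤ ‖w‖ := by
      rw [norm_smul, Real.norm_of_nonneg hμ.le]
      calc μ * ‖R μ w‖ ≤ μ * ((1 / μ) * ‖w‖) := by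
            exact mul_le_mul_of_nonneg_left
              (le_trans ((R μ).le_opNorm w)
                (mul_le_mul_of_nonneg_right hn (norm_nonneg w))) hμ.le
        _ = ‖w‖ := by field_simp
    have hun : ‖u‖ ≤ ‖x‖ / μ := by
      have := le_trans ((R₀ μ).le_opNorm x)
        (mul_le_mul_of_nonneg_right h0n (norm_nonneg x))
      rw [div_eq_mul_inv, mul_comm]
      simpa [one_div, div_eq_mul_inv] using this
    calc ‖μ • R μ w‖ ≤ ‖w‖ := hnw
      _ ≤ a * ‖μ • u - x‖ + b * ‖u‖ := hwb
      _ ≤ a * ‖μ • u - x‖ + b * (‖x‖ / μ) := by nlinarith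
  -- forward inclusion
  have fwd : Fav R₀ α ⊆ Fav R α := by
    intro x hx
    obtain ⟨M, hM⟩ := hx
    have hM0 : 0 ≤ M := le_trans (by positivity) (hM 1 one_pos)
    refine ⟨max (2 * ‖x‖) ((1 + a) * M + b * ‖x‖), fun μ hμ => ?_⟩
    rcases le_or_gt μ 1 with h1 | h1
    · exact le_trans (small R (fun ν hν => (hR ν hν).2) x μ hμ h1) (le_max_left _ _)
    · refine le_trans ?_ (le_max_right _ _)
      have hk := key x μ hμ
      have htri : ‖μ • R μ x - x‖ ≤ ‖μ • R₀ μ x - x‖ + (a * ‖μ • R₀ μ x - x‖ + b * (‖x‖ / μ)) := by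
        calc ‖μ • R μ x - x‖ = ‖(μ • R₀ μ x - x) + ((μ • R μ x - x) - (μ • R₀ μ x - x))‖ := by
              congr 1; abel
          _ ≤ ‖μ • R₀ μ x - x‖ + ‖(μ • R μ x - x) - (μ • R₀ μ x - x)‖ := norm_add_le _ _
          _ ≤ _ := by linarith
      have hp : (0:ℝ) < μ ^ α := Real.rpow_pos_of_pos hμ α
      have hpm : μ ^ α * ‖μ • R₀ μ x - x‖ ≤ M := hM μ hμ
      have hpd : μ ^ α * (‖x‖ / μ) ≤ ‖x‖ := by
        have hma : μ ^ α ≤ μ := by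
          have := Real.rpow_le_rpow_of_exponent_le h1.le hα1
          simpa using this
        have : μ ^ α / μ ≤ 1 := (div_le_one hμ).2 hma
        calc μ ^ α * (‖x‖ / μ) = (μ ^ α / μ) * ‖x‖ := by ring
          _ ≤ 1 * ‖x‖ := mul_le_mul_of_nonneg_right this (norm_nonneg x)
          _ = ‖x‖ := one_mul _
      nlinarith [mul_le_mul_of_nonneg_left htri hp.le]
  refine ⟨fwd, fun haa => le_antisymm fwd ?_⟩
  -- reverse inclusion when a < 1
  intro x hx
  obtain ⟨M, hM⟩ := hx
  have hM0 : 0 ≤ M := le_trans (by positivity) (hM 1 one_pos)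
  refine ⟨max (2 * ‖x‖) ((M + b * ‖x‖) / (1 - a)), fun μ hμ => ?_⟩
  rcases le_or_gt μ 1 with h1 | h1
  · exact le_trans (small R₀ (fun ν hν => (hR₀ ν hν).2) x μ hμ h1) (le_max_left _ _)
  · refine le_trans ?_ (le_max_right _ _)
    have hk := key x μ hμ
    have htri : ‖μ • R₀ μ x - x‖ ≤ ‖μ • R μ x - x‖ + (a * ‖μ • R₀ μ x - x‖ + b * (‖x‖ / μ)) := by
      calc ‖μ • R₀ μ x - x‖ = ‖(μ • R μ x - x) - ((μ • R μ x - x) - (μ • R₀ μ x - x))‖ := by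
            congr 1; abel
        _ ≤ ‖μ • R μ x - x‖ + ‖(μ • R μ x - x) - (μ • R₀ μ x - x)‖ := norm_sub_le _ _
        _ ≤ _ := by linarith
    have hp : (0:ℝ) < μ ^ α := Real.rpow_pos_of_pos hμ α
    have hpm : μ ^ α * ‖μ • R μ x - x‖ ≤ M := hM μ hμ
    have hpd : μ ^ α * (‖x‖ / μ) ≤ ‖x‖ := by
      have hma : μ ^ α ≤ μ := by
        have := Real.rpow_le_rpow_of_exponent_le h1.le hα1
        simpa using this
      have : μ ^ α / μ ≤ 1 := (div_le_one hμ).2 hma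
      calc μ ^ α * (‖x‖ / μ) = (μ ^ α / μ) * ‖x‖ := by ring
        _ ≤ 1 * ‖x‖ := mul_le_mul_of_nonneg_right this (norm_nonneg x)
        _ = ‖x‖ := one_mul _
    have h1a : (0:ℝ) < 1 - a := by linarith
    rw [le_div_iff₀ h1a]
    nlinarith [mul_le_mul_of_nonneg_left htri hp.le]
end
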